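/- Let b be an integer with 2 ≤ b ≤ p and ∂_b the K-linear endomorphism of K[x] given by ∂_b(f) = x²·f′ + b·x·f. Then ∂_b descends to the quotient K[x]/(x^{p+1−b}), and this quotient, as a module over H_q = K[∂]/(∂^p) with ∂ acting by the induced map, is cyclic generated by the image of 1 and is isomorphic to K[∂]/(∂^{p+1−b}). (This is the one-variable case of the computation of the slash homology of R^f, giving the balanced H_q-module V_{p−b}.) -/

import Mathlib

open Polynomial

set_option maxHeartbeats 1000000 in
theorem aux_slash (p : ℕ) (hp : Nat.Prime p)
    (K : Type*) [Field K] [CharP K p] (b : ℤ) (hb1 : 2 ≤ b) (hb2 : b ≤ (p : ℤ))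
    (n : ℕ) (hn : (n : ℤ) = (p : ℤ) + 1 - b)
    (D : Polynomial K → Polynomial K)
    (hD : ∀ f, D f = Polynomial.X ^ 2 * Polynomial.derivative f
      + Polynomial.C ((b : K)) * (Polynomial.X * f)) :
    ∃ Dbar : (Polynomial K ⧸ Ideal.span {(Polynomial.X : Polynomial K) ^ n}) →ₗ[K]
        (Polynomial K ⧸ Ideal.span {(Polynomial.X : Polynomial K) ^ n}),
      (∀ f : Polynomial K,
          Dbar (Ideal.Quotient.mk _ f) = Ideal.Quotient.mk _ (D f)) ∧
      Dbar ^ p = 0 ∧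
      Submodule.span K (Set.range fun i : ℕ =>
          (Dbar ^ i) (Ideal.Quotient.mk _ (1 : Polynomial K))) = ⊤ ∧
      ∃ e : (Polynomial K ⧸ Ideal.span {(Polynomial.X : Polynomial K) ^ n}) ≃ₗ[K]
          (Polynomial K ⧸ Ideal.span {(Polynomial.X : Polynomial K) ^ n}),
        ∀ v, e (Dbar v) = Ideal.Quotient.mk _ Polynomial.X * e v := by
  have hp2 : 2 ≤ p := hp.two_le
  have hn1 : 1 ≤ n := by omega
  have hnp : n < p := by omega
  set I : Ideal (Polynomial K) := Ideal.span {(X : Polynomial K) ^ n} with hI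
  set π : Polynomial K →+* (Polynomial K ⧸ I) := Ideal.Quotient.mk I with hπ
  -- basic facts about π
  have hπ0 : ∀ k : ℕ, n ≤ k → π (X ^ k) = 0 := by
    intro k hk
    rw [hπ, Ideal.Quotient.eq_zero_iff_mem, hI, Ideal.mem_span_singleton]
    exact pow_dvd_pow _ hk
  have hπC : ∀ (c : K) (f : Polynomial K), π (C c * f) = c • π f := by
    intro c f
    rw [← smul_eq_C_mul]
    exact (Submodule.Quotient.mk_smul I c f).symm
  -- the power basis
  have hmonic : ((X : Polynomial K) ^ n).Monic := monic_X_pow n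
  set pb : PowerBasis K (AdjoinRoot ((X : Polynomial K) ^ n)) := AdjoinRoot.powerBasis' hmonic with hpb
  have hdim : pb.dim = n := by simp [hpb]
  set B : Module.Basis (Fin n) K (Polynomial K ⧸ I) := pb.basis.reindex (finCongr hdim) with hBdef
  have hB : ∀ i : Fin n, B i = π (X ^ (i : ℕ)) := by
    intro i
    erw [Module.Basis.reindex_apply]
    rw [pb.coe_basis]
    show pb.gen ^ (((finCongr hdim).symm i : Fin pb.dim) : ℕ) = π (X ^ (i : ℕ))
    rw [map_pow]
    congr 1
  -- the induced map
  set Dbar : (Polynomial K ⧸ I) →ₗ[K] (Polynomial K ⧸ I) :=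
    B.constr K (fun i => ((b : K) + (i : ℕ)) • π (X ^ ((i : ℕ) + 1))) with hDbar
  have hmono : ∀ k : ℕ, Dbar (π (X ^ k)) = ((b : K) + k) • π (X ^ (k + 1)) := by
    intro k
    by_cases hk : k < n
    · have : π (X ^ k) = B ⟨k, hk⟩ := (hB ⟨k, hk⟩).symm
      rw [this, hDbar, Module.Basis.constr_basis]
    · rw [hπ0 k (le_of_not_gt hk), hπ0 (k + 1) (by omega), map_zero, smul_zero]
  -- action of D on powers of X
  have hDpow : ∀ k : ℕ, π (D (X ^ k)) = ((b : K) + k) • π (X ^ (k + 1)) := by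
    intro k
    have hd : (X:Polynomial K) ^ 2 * derivative ((X:Polynomial K) ^ k)
        + C ((b:K)) * (X * X ^ k) = C ((b : K) + k) * X ^ (k + 1) := by
      rcases Nat.eq_zero_or_pos k with hk0 | hk1
      · subst hk0; simp [pow_succ]; try ring
      · rw [derivative_X_pow]
        rw [C_add, map_natCast]
        have h2 : (X:Polynomial K) ^ 2 * ((k : Polynomial K) * X ^ (k - 1))
            = (k : Polynomial K) * X ^ (k + 1) := by
          rw [show k + 1 = (k-1) + 2 by omega]
          ring
        rw [h2]; ring
    rw [hD, hd, hπC]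
  have hdescpow : ∀ k : ℕ, Dbar (π (X ^ k)) = π (D (X ^ k)) := by
    intro k; rw [hmono, hDpow]
  -- D is compatible with C-scaling and addition
  have hDC : ∀ (a : K) (f : Polynomial K), D (C a * f) = C a * D f := by
    intro a f; rw [hD, hD, derivative_C_mul]; ring
  have hDadd : ∀ f g : Polynomial K, D (f + g) = D f + D g := by
    intro f g; rw [hD, hD, hD, derivative_add]; ring
  -- descent
  have hdesc : ∀ f : Polynomial K, Dbar (π f) = π (D f) := by
    intro f
    induction f using Polynomial.induction_on' with
    | add f g hf hg => rw [map_add, map_add, hDadd, map_add, hf, hg]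
    | monomial k a =>
        rw [← C_mul_X_pow_eq_monomial, hDC, hπC, hπC, map_smul, hdescpow]
  -- iterates on powers of X
  have hpow : ∀ (j k : ℕ), ∃ c : K, (Dbar ^ j) (π (X ^ k)) = c • π (X ^ (k + j)) := by
    intro j
    induction j with
    | zero => intro k; exact ⟨1, by simp⟩
    | succ j ih =>
        intro k
        obtain ⟨c, hc⟩ := ih (k + 1)
        refine ⟨((b : K) + k) * c, ?_⟩
        rw [pow_succ, Module.End.mul_apply, hmono, map_smul, hc, smul_smul,
          show k + 1 + j = k + (j + 1) from by omega]
  -- nilpotency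
  have hDp : Dbar ^ p = 0 := by
    apply B.ext
    intro i
    obtain ⟨c, hc⟩ := hpow p (i : ℕ)
    have h0 : π (X ^ ((i : ℕ) + p)) = 0 := hπ0 _ (by omega)
    rw [hB, hc, h0, smul_zero, LinearMap.zero_apply]
  -- the scalar products
  set cc : ℕ → K := fun i => ∏ j ∈ Finset.range i, ((b : K) + j) with hcc_def
  have hfac : ∀ j : ℕ, (j : ℤ) + b < p → ((b : K) + j) ≠ 0 := by
    intro j hj h0
    have : (((b + j : ℤ)) : K) = 0 := by push_cast; linear_combination h0
    rw [CharP.intCast_eq_zero_iff K p] at this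
    have hle := Int.le_of_dvd (by omega) this
    omega
  have hcc : ∀ i : ℕ, i < n → cc i ≠ 0 := by
    intro i hi
    rw [hcc_def]
    apply Finset.prod_ne_zero_iff.mpr
    intro j hj
    rw [Finset.mem_range] at hj
    exact hfac j (by omega)
  have hgen : ∀ i : ℕ, (Dbar ^ i) (π 1) = cc i • π (X ^ i) := by
    intro i
    induction i with
    | zero => simp [hcc_def]
    | succ i ih =>
        rw [pow_succ', Module.End.mul_apply, ih, map_smul, hmono, smul_smul]
        congr 1
        simp only [hcc_def]
        rw [Finset.prod_range_succ, mul_comm]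
  -- cyclicity
  have hspan : Submodule.span K (Set.range fun i : ℕ => (Dbar ^ i) (π 1)) = ⊤ := by
    rw [eq_top_iff, ← B.span_eq, Submodule.span_le]
    rintro x ⟨i, rfl⟩
    have h1 : (Dbar ^ (i : ℕ)) (π 1) ∈
        Submodule.span K (Set.range fun i : ℕ => (Dbar ^ i) (π 1)) :=
      Submodule.subset_span ⟨(i : ℕ), rfl⟩
    have h2 : B i = (cc (i : ℕ))⁻¹ • (Dbar ^ (i : ℕ)) (π 1) := by
      rw [hgen, smul_smul, inv_mul_cancel₀ (hcc _ i.2), one_smul, hB]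
    rw [h2]
    exact Submodule.smul_mem _ _ h1
  -- the equivalence
  set w : Fin n → Kˣ := fun i => Units.mk0 ((cc (i : ℕ))⁻¹) (inv_ne_zero (hcc _ i.2)) with hw
  set e : (Polynomial K ⧸ I) ≃ₗ[K] (Polynomial K ⧸ I) :=
    B.equiv (B.unitsSMul w) (Equiv.refl _) with he_def
  have heB : ∀ i : Fin n, e (B i) = (cc (i : ℕ))⁻¹ • B i := by
    intro i
    rw [he_def, Module.Basis.equiv_apply, Equiv.refl_apply, Module.Basis.unitsSMul_apply]
    simp [hw, Units.smul_def]
  have heπ : ∀ k : ℕ, e (π (X ^ k)) = (cc k)⁻¹ • π (X ^ k) := by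
    intro k
    by_cases hk : k < n
    · have h : π (X ^ k) = B ⟨k, hk⟩ := (hB ⟨k, hk⟩).symm
      rw [h, heB]
    · rw [hπ0 k (le_of_not_gt hk), map_zero, smul_zero]
  have hccsucc : ∀ k : ℕ, cc (k + 1) = cc k * ((b : K) + k) := by
    intro k; simp only [hcc_def]; rw [Finset.prod_range_succ]
  have hcomm : ∀ v, e (Dbar v) = π X * e v := by
    have key : (e.toLinearMap ∘ₗ Dbar) = (LinearMap.mulLeft K (π X)) ∘ₗ e.toLinearMap := by
      apply B.ext
      intro i
      simp only [LinearMap.comp_apply, LinearEquiv.coe_coe, LinearMap.mulLeft_apply]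
      rw [hB, hmono, map_smul, heπ, heπ, smul_smul, mul_smul_comm, ← map_mul, ← pow_succ']
      by_cases hk : (i : ℕ) + 1 < n
      · congr 1
        rw [hccsucc]
        have hbne : ((b : K) + (i : ℕ)) ≠ 0 := hfac _ (by omega)
        have hcne : cc (i : ℕ) ≠ 0 := hcc _ i.2
        field_simp
      · have h0 : π (X ^ ((i : ℕ) + 1)) = 0 := hπ0 _ (by omega)
        rw [h0, smul_zero, smul_zero]
    intro v
    simpa using LinearMap.congr_fun key v
  exact ⟨Dbar, hdesc, hDp, hspan, e, hcomm⟩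



/-- For `2 ≤ b ≤ p`, the twisted `p`-differential `∂_b` descends to `K[x]/(x^{p+1−b})`;
the quotient is a cyclic `H_q = K[∂]/(∂^p)`-module generated by the image of `1`, and is
isomorphic to `K[∂]/(∂^{p+1−b})` (the balanced module `V_{p−b}`). -/
theorem slash_homology_one_variable (p : ℕ) (hp : Nat.Prime p) (hodd : Odd p)
    (K : Type*) [Field K] [CharP K p] (b : ℤ) (hb1 : 2 ≤ b) (hb2 : b ≤ (p : ℤ))
    (D : Polynomial K → Polynomial K)
    (hD : ∀ f, D f = Polynomial.X ^ 2 * Polynomial.derivative f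
      + Polynomial.C ((b : K)) * (Polynomial.X * f)) :
    ∃ Dbar : (Polynomial K ⧸ Ideal.span {(Polynomial.X : Polynomial K) ^ ((p : ℤ) + 1 - b).toNat}) →ₗ[K]
        (Polynomial K ⧸ Ideal.span {(Polynomial.X : Polynomial K) ^ ((p : ℤ) + 1 - b).toNat}),
      (∀ f : Polynomial K,
          Dbar (Ideal.Quotient.mk _ f) = Ideal.Quotient.mk _ (D f)) ∧
      Dbar ^ p = 0 ∧
      Submodule.span K (Set.range fun i : ℕ =>
          (Dbar ^ i) (Ideal.Quotient.mk _ (1 : Polynomial K))) = ⊤ ∧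
      ∃ e : (Polynomial K ⧸ Ideal.span {(Polynomial.X : Polynomial K) ^ ((p : ℤ) + 1 - b).toNat}) ≃ₗ[K]
          (Polynomial K ⧸ Ideal.span {(Polynomial.X : Polynomial K) ^ ((p : ℤ) + 1 - b).toNat}),
        ∀ v, e (Dbar v) = Ideal.Quotient.mk _ Polynomial.X * e v := by
  exact aux_slash p hp K b hb1 hb2 (((p : ℤ) + 1 - b).toNat)
    (Int.toNat_of_nonneg (by omega)) D hD
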